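/- A torsion-free group that is virtually cyclic is cyclic. -/

import Mathlib

open Subgroup Function

section Aux

variable {G : Type*} [Group G]

lemma tf_pow_eq_one (htf : (∀ g : G, g ≠ 1 → ¬IsOfFinOrder g)) {g : G} {n : ℕ}
    (hn : n ≠ 0) (h : g ^ n = 1) : g = 1 := by
  by_contra hg
  exact htf g hg (isOfFinOrder_iff_pow_eq_one.mpr ⟨n, Nat.pos_of_ne_zero hn, h⟩)

lemma tf_finite_cyclic (htf : (∀ g : G, g ≠ 1 → ¬IsOfFinOrder g)) (hG : Finite G) : IsCyclic G := by
  have hs : Subsingleton G := by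
    constructor
    intro a b
    have ha : a = 1 := by
      by_contra h; exact htf a h (isOfFinOrder_of_finite a)
    have hb : b = 1 := by
      by_contra h; exact htf b h (isOfFinOrder_of_finite b)
    rw [ha, hb]
  exact isCyclic_of_subsingleton

lemma tf_subgroup (htf : (∀ g : G, g ≠ 1 → ¬IsOfFinOrder g)) (H : Subgroup G) :
    (∀ g : H, g ≠ 1 → ¬IsOfFinOrder g) := by
  intro x hx hfin
  obtain ⟨n, hn, hpow⟩ := isOfFinOrder_iff_pow_eq_one.mp hfin
  have : (x : G) ^ n = 1 := by
    have := congrArg (Subtype.val) hpow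
    simpa using this
  have hx1 : (x : G) = 1 := tf_pow_eq_one htf hn.ne' this
  exact hx (Subtype.ext hx1)

lemma zpowers_isCyclic (z : G) : IsCyclic (Subgroup.zpowers z) := by
  refine ⟨⟨⟨z, mem_zpowers z⟩, fun x => ?_⟩⟩
  obtain ⟨k, hk⟩ := mem_zpowers_iff.mp x.2
  exact mem_zpowers_iff.mpr ⟨k, Subtype.ext (by simpa using hk)⟩

lemma isCyclic_of_injective' {H : Type*} [Group H] [IsCyclic H] (f : G →* H)
    (hf : Injective f) : IsCyclic G := by
  haveI : IsCyclic f.range := Subgroup.isCyclic _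
  exact isCyclic_of_surjective _ (MonoidHom.ofInjective hf).symm.surjective

lemma conj_zpow' (u x : G) (n : ℤ) : u * x ^ n * u⁻¹ = (u * x * u⁻¹) ^ n := by
  have := map_zpow (MulAut.conj u) x n
  simp only [MulAut.conj_apply] at this; exact this

/-- An "abelian" torsion-free group with a finite-index cyclic subgroup is cyclic. -/
lemma lemAb (htf : (∀ g : G, g ≠ 1 → ¬IsOfFinOrder g)) (comm : ∀ a b : G, a * b = b * a)
    (z : G) [hfi : (Subgroup.zpowers z).FiniteIndex] : IsCyclic G := by
  haveI : (Subgroup.zpowers z).Normal := by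
    constructor
    intro x hx g
    have : g * x * g⁻¹ = x := by rw [comm g x]; group
    rwa [this]
  set n := (Subgroup.zpowers z).index with hn
  have hn0 : n ≠ 0 := hfi.index_ne_zero
  let f : G →* Subgroup.zpowers z :=
    { toFun := fun g => ⟨g ^ n, (Subgroup.zpowers z).pow_index_mem g⟩
      map_one' := Subtype.ext (one_pow n)
      map_mul' := fun a b => Subtype.ext (by
        simpa using (show Commute a b from comm a b).mul_pow n) }
  have hf : Injective f := by
    rw [injective_iff_map_eq_one]
    intro a ha
    have : a ^ n = 1 := by
      have := congrArg Subtype.val ha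
      simpa [f] using this
    exact tf_pow_eq_one htf hn0 this
  haveI : IsCyclic (Subgroup.zpowers z) := zpowers_isCyclic z
  exact isCyclic_of_injective' f hf

/-- A torsion-free group with a finite-index central cyclic subgroup is cyclic. -/
lemma lemCentral (htf : (∀ g : G, g ≠ 1 → ¬IsOfFinOrder g)) (z : G)
    (hz : z ∈ Subgroup.center G) [hfi : (Subgroup.zpowers z).FiniteIndex] : IsCyclic G := by
  haveI hC : (Subgroup.center G).FiniteIndex :=
    Subgroup.finiteIndex_of_le (Subgroup.zpowers_le.mpr hz)
  have hm0 : (Subgroup.center G).index ≠ 0 := hC.index_ne_zero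
  have hf : Injective (MonoidHom.transferCenterPow G) := by
    rw [injective_iff_map_eq_one]
    intro a ha
    have h3 := congrArg Subtype.val ha
    rw [MonoidHom.transferCenterPow_apply, OneMemClass.coe_one] at h3
    exact tf_pow_eq_one htf hm0 h3
  have comm : ∀ a b : G, a * b = b * a := by
    intro a b
    apply hf
    apply Subtype.ext
    rw [MonoidHom.transferCenterPow_apply, MonoidHom.transferCenterPow_apply]
    have hc : (a * b) ^ (Subgroup.center G).index ∈ Subgroup.center G :=
      (Subgroup.center G).pow_index_mem (a * b)
    have hsc : SemiconjBy b (a * b) (b * a) := by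
      unfold SemiconjBy; group
    have h1 : b * (a * b) ^ (Subgroup.center G).index
        = (b * a) ^ (Subgroup.center G).index * b := hsc.pow_right _
    have h2 : b * (a * b) ^ (Subgroup.center G).index
        = (a * b) ^ (Subgroup.center G).index * b := by
      rw [Subgroup.mem_center_iff.mp hc b]
    rw [h1] at h2
    exact (mul_right_cancel h2).symm
  exact lemAb htf comm z

end Aux

/-- A torsion-free virtually cyclic group is cyclic. -/
theorem stmt3 {G : Type} [Group G] (htf : (∀ g : G, g ≠ 1 → ¬IsOfFinOrder g))
    (h : ∃ H : Subgroup G, IsCyclic H ∧ H.FiniteIndex) : IsCyclic G := by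
  classical
  obtain ⟨H, hHc, hHfi⟩ := h
  haveI := hHfi
  haveI hNn : H.normalCore.Normal := H.normalCore_normal
  haveI hNfi : H.normalCore.FiniteIndex := inferInstance
  by_cases hN : H.normalCore = ⊥
  · have h0 : Nat.card G ≠ 0 := by
      have := hNfi.index_ne_zero
      rwa [hN, Subgroup.index_bot] at this
    exact tf_finite_cyclic htf (Nat.finite_of_card_ne_zero h0)
  · -- H.normalCore is a nontrivial normal cyclic subgroup of finite index
    haveI : IsCyclic H.normalCore := by
      haveI := hHc
      haveI : IsCyclic (H.normalCore.subgroupOf H) := Subgroup.isCyclic _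
      exact isCyclic_of_surjective _ (Subgroup.subgroupOfEquivOfLe H.normalCore_le).surjective
    obtain ⟨g₀, hg₀⟩ := IsCyclic.exists_generator (α := H.normalCore)
    set z : G := (g₀ : G) with hzdef
    have hNz : H.normalCore = Subgroup.zpowers z := by
      ext x
      constructor
      · intro hx
        obtain ⟨k, hk⟩ := mem_zpowers_iff.mp (hg₀ ⟨x, hx⟩)
        exact mem_zpowers_iff.mpr ⟨k, by simpa using congrArg Subtype.val hk⟩
      · rintro ⟨k, rfl⟩
        exact Subgroup.zpow_mem H.normalCore g₀.2 k
    have hzN : z ∈ H.normalCore := g₀.2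
    have hz1 : z ≠ 1 := by
      intro hz
      apply hN
      rw [hNz, hz, Subgroup.zpowers_one_eq_bot]
    have hzinj : Injective (fun k : ℤ => z ^ k) :=
      injective_zpow_iff_not_isOfFinOrder.mpr (htf z hz1)
    have hNK : H.normalCore ≤ Subgroup.centralizer {z} := by
      rw [hNz]
      rintro x ⟨k, rfl⟩
      exact Subgroup.mem_centralizer_singleton_iff.mpr ((Commute.refl z).zpow_left k).eq
    haveI hKfi : (Subgroup.centralizer {z}).FiniteIndex := Subgroup.finiteIndex_of_le hNK
    have hzK : z ∈ Subgroup.centralizer {z} := hNK hzN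
    set zK : Subgroup.centralizer {z} := ⟨z, hzK⟩ with hzKdef
    have hzKc : zK ∈ Subgroup.center (Subgroup.centralizer {z}) := by
      rw [Subgroup.mem_center_iff]
      intro g
      exact Subtype.ext (by simpa using Subgroup.mem_centralizer_singleton_iff.mp g.2)
    have hzpsub : Subgroup.zpowers zK = (H.normalCore).subgroupOf (Subgroup.centralizer {z}) := by
      ext x
      rw [Subgroup.mem_subgroupOf, hNz]
      constructor
      · rintro ⟨k, rfl⟩
        exact ⟨k, by simp [hzKdef]⟩
      · rintro ⟨k, hk⟩
        exact ⟨k, Subtype.ext (by simpa using hk)⟩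
    haveI : (Subgroup.zpowers zK).FiniteIndex := by
      rw [hzpsub]; infer_instance
    haveI hKcyc : IsCyclic (Subgroup.centralizer {z}) :=
      lemCentral (tf_subgroup htf _) zK hzKc
    obtain ⟨w, hw⟩ := IsCyclic.exists_generator (α := Subgroup.centralizer {z})
    obtain ⟨mz, hmz⟩ : ∃ mz : ℤ, (w : G) ^ mz = z := by
      obtain ⟨k, hk⟩ := mem_zpowers_iff.mp (hw zK)
      exact ⟨k, by simpa using congrArg Subtype.val hk⟩
    have hw1 : (w : G) ≠ 1 := by
      intro hww
      apply hz1
      rw [← hmz, hww, one_zpow]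
    have hwinj : Injective (fun k : ℤ => (w : G) ^ k) :=
      injective_zpow_iff_not_isOfFinOrder.mpr (htf _ hw1)
    have hmz0 : mz ≠ 0 := by
      intro h0
      apply hz1
      rw [← hmz, h0, zpow_zero]
    -- key claim: the centralizer of z is all of G
    have hK : ∀ g : G, g ∈ Subgroup.centralizer {z} := by
      intro g
      have h1 : g * z * g⁻¹ ∈ H.normalCore := hNn.conj_mem z hzN g
      have h2 : g⁻¹ * z * g ∈ H.normalCore := by
        have := hNn.conj_mem z hzN g⁻¹
        simpa using this
      rw [hNz] at h1 h2
      obtain ⟨k, hk⟩ := mem_zpowers_iff.mp h1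
      obtain ⟨k', hk'⟩ := mem_zpowers_iff.mp h2
      have hkk' : k * k' = 1 := by
        apply hzinj
        show z ^ (k * k') = z ^ (1 : ℤ)
        have e1 : g⁻¹ * z ^ k * g = (g⁻¹ * z * g) ^ k := by
          have h := conj_zpow' g⁻¹ z k
          rwa [inv_inv] at h
        rw [← hk', ← zpow_mul] at e1
        have e2 : g⁻¹ * z ^ k * g = z := by rw [hk]; group
        rw [e2] at e1
        rw [zpow_one, mul_comm k k']
        exact e1.symm
      rcases Int.mul_eq_one_iff_eq_one_or_neg_one.mp hkk' with ⟨hk1, hk'1⟩ | ⟨hk1, hk'1⟩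
      · -- conjugation fixes z, so g centralizes z
        rw [hk1, zpow_one] at hk
        apply Subgroup.mem_centralizer_singleton_iff.mpr
        calc g * z = (g * z * g⁻¹) * g := by group
          _ = z * g := by rw [← hk]
      · -- conjugation inverts z; derive a contradiction-ish: g = 1
        rw [hk1, zpow_neg, zpow_one] at hk
        rw [hk'1, zpow_neg, zpow_one] at hk'
        -- hk : z⁻¹ = g * z * g⁻¹, hk' : z⁻¹ = g⁻¹ * z * g
        have hconjK : ∀ u : G, (u * z * u⁻¹ = z⁻¹) → (u⁻¹ * z * u = z⁻¹) →
            ∀ x ∈ Subgroup.centralizer {z}, u * x * u⁻¹ ∈ Subgroup.centralizer {z} := by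
          intro u hu hu' x hx
          have hxz : x * z = z * x := Subgroup.mem_centralizer_singleton_iff.mp hx
          apply Subgroup.mem_centralizer_singleton_iff.mpr
          have hxz' : x * z⁻¹ = z⁻¹ * x := by
            calc x * z⁻¹ = z⁻¹ * (z * x) * z⁻¹ := by group
              _ = z⁻¹ * (x * z) * z⁻¹ := by rw [hxz]
              _ = z⁻¹ * x := by group
          have huz : u * z⁻¹ * u⁻¹ = z := by
            have h5 : u * z⁻¹ * u⁻¹ = (u * z * u⁻¹)⁻¹ := by group
            rw [h5, hu, inv_inv]
          calc (u * x * u⁻¹) * z = u * (x * (u⁻¹ * z * u)) * u⁻¹ := by group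
            _ = u * (x * z⁻¹) * u⁻¹ := by rw [hu']
            _ = u * (z⁻¹ * x) * u⁻¹ := by rw [hxz']
            _ = (u * z⁻¹ * u⁻¹) * (u * x * u⁻¹) := by group
            _ = z * (u * x * u⁻¹) := by rw [huz]
        have hgK : ∀ x ∈ Subgroup.centralizer {z},
            g * x * g⁻¹ ∈ Subgroup.centralizer {z} := hconjK g hk.symm hk'.symm
        have hgK' : ∀ x ∈ Subgroup.centralizer {z},
            g⁻¹ * x * g ∈ Subgroup.centralizer {z} := by
          intro x hx
          have h6 := hconjK g⁻¹ (by rw [inv_inv]; exact hk'.symm)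
            (by rw [inv_inv]; exact hk.symm) x hx
          rwa [inv_inv] at h6
        obtain ⟨j, hj⟩ : ∃ j : ℤ, (w : G) ^ j = g * w * g⁻¹ := by
          obtain ⟨j, hj⟩ := mem_zpowers_iff.mp (hw ⟨_, hgK w w.2⟩)
          exact ⟨j, by simpa using congrArg Subtype.val hj⟩
        obtain ⟨j', hj'⟩ : ∃ j' : ℤ, (w : G) ^ j' = g⁻¹ * w * g := by
          obtain ⟨j', hj'⟩ := mem_zpowers_iff.mp (hw ⟨_, hgK' w w.2⟩)
          exact ⟨j', by simpa using congrArg Subtype.val hj'⟩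
        have hjj' : j * j' = 1 := by
          apply hwinj
          show (w : G) ^ (j * j') = (w : G) ^ (1 : ℤ)
          have e1 : g⁻¹ * (w : G) ^ j * g = (g⁻¹ * (w : G) * g) ^ j := by
            have h := conj_zpow' g⁻¹ (w : G) j
            rwa [inv_inv] at h
          rw [← hj', ← zpow_mul] at e1
          have e2 : g⁻¹ * (w : G) ^ j * g = w := by rw [hj]; group
          rw [e2] at e1
          rw [zpow_one, mul_comm j j']
          exact e1.symm
        have hj_neg : j = -1 := by
          have hA : g * z * g⁻¹ = (w : G) ^ (j * mz) := by
            calc g * z * g⁻¹ = g * (w : G) ^ mz * g⁻¹ := by rw [hmz]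
              _ = (g * (w : G) * g⁻¹) ^ mz := conj_zpow' g (w : G) mz
              _ = ((w : G) ^ j) ^ mz := by rw [hj]
              _ = (w : G) ^ (j * mz) := by rw [← zpow_mul]
          have hB : g * z * g⁻¹ = (w : G) ^ (-mz) := by
            rw [← hk, zpow_neg, hmz]
          have h7 : j * mz = -mz := by
            apply hwinj
            show (w : G) ^ (j * mz) = (w : G) ^ (-mz)
            rw [← hA, hB]
          have h8 : j * mz = (-1) * mz := by rw [h7]; ring
          exact mul_right_cancel₀ hmz0 h8
        have hg2 : g * g ∈ Subgroup.centralizer {z} := by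
          apply Subgroup.mem_centralizer_singleton_iff.mpr
          have hzz : g * z⁻¹ * g⁻¹ = z := by
            have h5 : g * z⁻¹ * g⁻¹ = (g * z * g⁻¹)⁻¹ := by group
            rw [h5, ← hk, inv_inv]
          calc (g * g) * z = g * (g * z * g⁻¹) * g := by group
            _ = g * z⁻¹ * g := by rw [← hk]
            _ = (g * z⁻¹ * g⁻¹) * (g * g) := by group
            _ = z * (g * g) := by rw [hzz]
        obtain ⟨i, hi⟩ : ∃ i : ℤ, (w : G) ^ i = g * g := by
          obtain ⟨i, hi⟩ := mem_zpowers_iff.mp (hw ⟨_, hg2⟩)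
          exact ⟨i, by simpa using congrArg Subtype.val hi⟩
        have hi0 : i = 0 := by
          have e1 : g * (w : G) ^ i * g⁻¹ = ((w : G) ^ j) ^ i := by
            rw [conj_zpow' g (w : G) i, hj]
          have e2 : g * (w : G) ^ i * g⁻¹ = (w : G) ^ i := by rw [hi]; group
          rw [hj_neg] at e1
          have e3 : (w : G) ^ i = (w : G) ^ (-i) := by
            rw [← e2, e1, ← zpow_mul, neg_one_mul]
          have := hwinj e3
          omega
        have hgg : g * g = 1 := by rw [← hi, hi0, zpow_zero]
        have hg1 : g = 1 := tf_pow_eq_one htf (n := 2) two_ne_zero (by rw [pow_two]; exact hgg)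
        rw [hg1]
        exact Subgroup.one_mem _
    have hzc : z ∈ Subgroup.center G := by
      rw [Subgroup.mem_center_iff]
      intro g
      exact Subgroup.mem_centralizer_singleton_iff.mp (hK g)
    haveI : (Subgroup.zpowers z).FiniteIndex := hNz ▸ hNfi
    exact lemCentral htf z hzc
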